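/- The linear map M_J : ℝ^14 → ℝ^13 defined below has rank exactly 9, and its kernel is exactly the 5-dimensional subspace consisting of all vectors c^J_0(λ1,λ2,λ3,λ4,λ5) = (λ1−λ2+λ3−λ4, λ4−λ3, −λ4−λ2+λ3−2λ5, λ1−λ2, λ3, λ4+λ2−λ3+λ5, λ1−λ2+λ3, λ4, λ1−λ2+λ3, λ1, λ2, λ3, λ4, λ5) ∈ ℝ^14 with λ1, λ2, λ3, λ4, λ5 ∈ ℝ. -/

import Mathlib

noncomputable section

/-- The coefficient matrix `M_J` of the type-J divergence system:
rows are `d89,…,d101`, columns are `c96,…,c109`. -/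
def MJ : Matrix (Fin 13) (Fin 14) ℝ :=
  !![-1, 0, 0, 0, 0, 0, 1, -1, 0, 0, 0, 0, 0, 0;
    -1, 0, 0, 0, 0, -1, 0, 0, 0, 1, 0, 0, 0, 1;
    1, 0, 0, 0, 0, 0, 0, 0, -1, 0, 0, 0, 1, 0;
    0, 0, 0, 0, 0, 0, -1, 0, 1, 0, 0, 0, 0, 0;
    0, -1, 0, 0, -1, 0, 0, 0, 0, 0, 0, 0, 1, 0;
    0, 1, 0, 0, 0, -1, 0, 0, 0, 0, 1, 0, 0, 1;
    0, 1, 0, 0, 0, 0, 0, -1, 0, 0, 0, 1, 0, 0;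
    0, 0, 0, 0, 0, 0, 0, -1, 0, 0, 0, 0, 1, 0;
    0, 0, 0, -1, 0, 0, 0, 0, 1, 0, 0, -1, 0, 0;
    0, 0, 0, 1, 0, 0, 0, 0, 0, -1, 1, 0, 0, 0;
    0, 0, 0, 0, -1, 0, 0, 0, 0, 0, 0, 1, 0, 0;
    0, 0, 0, 1, 1, 0, -1, 0, 0, 0, 0, 0, 0, 0;
    0, 0, 1, 0, 0, 1, 0, 0, 0, 0, 0, 0, 0, 1]

/-- The kernel parametrization `c^J_0(λ1,…,λ5) ∈ ℝ^14`. -/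
def cJ0 (l1 l2 l3 l4 l5 : ℝ) : Fin 14 → ℝ :=
  ![l1 - l2 + l3 - l4,
    -l3 + l4,
    -l2 + l3 - l4 - 2 * l5,
    l1 - l2,
    l3,
    l2 - l3 + l4 + l5,
    l1 - l2 + l3,
    l4,
    l1 - l2 + l3,
    l1,
    l2,
    l3,
    l4,
    l5]

lemma ker_iff (c : Fin 14 → ℝ) : MJ.mulVec c = 0 ↔ ∃ l1 l2 l3 l4 l5 : ℝ,
    c = cJ0 l1 l2 l3 l4 l5 := by
  obtain ⟨x0,x1,x2,x3,x4,x5,x6,x7,x8,x9,x10,x11,x12,x13, rfl⟩ :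
      ∃ x0 x1 x2 x3 x4 x5 x6 x7 x8 x9 x10 x11 x12 x13 : ℝ,
        c = ![x0,x1,x2,x3,x4,x5,x6,x7,x8,x9,x10,x11,x12,x13] :=
    ⟨c 0, c 1, c 2, c 3, c 4, c 5, c 6, c 7, c 8, c 9, c 10, c 11, c 12, c 13,
      funext fun i => by fin_cases i <;> rfl⟩
  constructor
  · intro h
    simp only [MJ, Matrix.cons_mulVec, Matrix.cons_dotProduct, Matrix.dotProduct_of_isEmpty,
      Matrix.empty_mulVec, Matrix.cons_eq_zero_iff, Matrix.head_cons,
      Matrix.tail_cons, Matrix.cons_val_zero, Matrix.cons_val_succ] at h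
    obtain ⟨h0,h1,h2,h3,h4,h5,h6,h7,h8,h9,h10,h11,h12,-⟩ := h
    refine ⟨x9, x10, x11, x12, x13, ?_⟩
    simp only [cJ0, Matrix.vecCons, Fin.cons_inj]
    and_intros <;> first | linarith | trivial
  · rintro ⟨l1, l2, l3, l4, l5, hc⟩
    rw [hc]
    simp only [cJ0, MJ, Matrix.cons_mulVec, Matrix.cons_dotProduct, Matrix.dotProduct_of_isEmpty,
      Matrix.empty_mulVec, Matrix.cons_eq_zero_iff, Matrix.head_cons,
      Matrix.tail_cons, Matrix.cons_val_zero, Matrix.cons_val_succ]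
    and_intros <;> first | exact funext (fun i => i.elim0) | ring

def BJ : Matrix (Fin 14) (Fin 5) ℝ :=
  !![1, -1, 1, -1, 0;
    0, 0, -1, 1, 0;
    0, -1, 1, -1, -2;
    1, -1, 0, 0, 0;
    0, 0, 1, 0, 0;
    0, 1, -1, 1, 1;
    1, -1, 1, 0, 0;
    0, 0, 0, 1, 0;
    1, -1, 1, 0, 0;
    1, 0, 0, 0, 0;
    0, 1, 0, 0, 0;
    0, 0, 1, 0, 0;
    0, 0, 0, 1, 0;
    0, 0, 0, 0, 1]

lemma hB (l : Fin 5 → ℝ) : BJ.mulVec l = cJ0 (l 0) (l 1) (l 2) (l 3) (l 4) := by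
  obtain ⟨y0, y1, y2, y3, y4, rfl⟩ : ∃ y0 y1 y2 y3 y4 : ℝ, l = ![y0, y1, y2, y3, y4] :=
    ⟨l 0, l 1, l 2, l 3, l 4, funext fun i => by fin_cases i <;> rfl⟩
  simp only [BJ, cJ0, Matrix.cons_mulVec, Matrix.cons_dotProduct, Matrix.dotProduct_of_isEmpty,
    Matrix.empty_mulVec,
    Matrix.cons_val_zero, Matrix.cons_val_one, Matrix.cons_val_two, Matrix.cons_val_three,
    Matrix.cons_val_four, Matrix.head_cons, Matrix.tail_cons]
  simp only [Matrix.vecCons, Fin.cons_inj]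
  and_intros <;> first | ring | trivial

lemma hBker : LinearMap.range BJ.mulVecLin = LinearMap.ker MJ.mulVecLin := by
  ext c
  simp only [LinearMap.mem_range, LinearMap.mem_ker, Matrix.mulVecLin_apply]
  constructor
  · rintro ⟨l, rfl⟩
    rw [hB]
    exact (ker_iff _).mpr ⟨l 0, l 1, l 2, l 3, l 4, rfl⟩
  · intro h
    obtain ⟨l1, l2, l3, l4, l5, rfl⟩ := (ker_iff _).mp h
    exact ⟨![l1, l2, l3, l4, l5], by rw [hB]; rfl⟩

lemma hBinj : Function.Injective BJ.mulVecLin := by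
  rw [← LinearMap.ker_eq_bot, LinearMap.ker_eq_bot']
  intro l hl
  rw [Matrix.mulVecLin_apply, hB] at hl
  simp only [cJ0, Matrix.cons_eq_zero_iff] at hl
  obtain ⟨-, -, -, -, -, -, -, -, -, h9, h10, h11, h12, h13, -⟩ := hl
  funext i
  fin_cases i
  exacts [h9, h10, h11, h12, h13]

lemma MJ_rank : MJ.rank = 9 := by
  have h14 := LinearMap.finrank_range_add_finrank_ker MJ.mulVecLin
  have hker : Module.finrank ℝ (LinearMap.ker MJ.mulVecLin) = 5 := by
    rw [← hBker, LinearMap.finrank_range_of_inj hBinj, Module.finrank_pi]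
    simp
  rw [Module.finrank_pi, Fintype.card_fin] at h14
  have : MJ.rank = Module.finrank ℝ (LinearMap.range MJ.mulVecLin) := rfl
  omega

/-- `M_J` has rank exactly 9 and its kernel is exactly the set of
vectors `c^J_0(λ1,…,λ5)`. -/
theorem MJ_rank_and_kernel :
    MJ.rank = 9 ∧
      (∀ c : Fin 14 → ℝ, MJ.mulVec c = 0 ↔ ∃ l1 l2 l3 l4 l5 : ℝ,
        c = cJ0 l1 l2 l3 l4 l5) :=
  ⟨MJ_rank, ker_iff⟩
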